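/- (The IEM of a Gaussian prior is the Mahalanobis distance.) Let μ ∈ ℝ^d, let Σ be a symmetric positive-definite d×d real matrix, and let p be the Gaussian density N(μ, Σ). Then for all x₁, x₂ ∈ ℝ^d, ∫₀^∞ E_{w ~ N(0, γI)}[‖∇ log q_γ(γx₁ + w) − ∇ log q_γ(γx₂ + w)‖²] dγ = (x₁ − x₂)ᵀ Σ^{−1} (x₁ − x₂); that is, IEM_p(x₁, x₂, ∞) equals the Mahalanobis distance √((x₁ − x₂)ᵀ Σ^{−1} (x₁ − x₂)). -/

import Mathlib

open MeasureTheory Real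
open scoped ENNReal

noncomputable def gaussDensity (d : ℕ) (γ : ℝ) (w : EuclideanSpace ℝ (Fin d)) : ℝ :=
  (2 * Real.pi * γ) ^ (-(d : ℝ) / 2) * Real.exp (-‖w‖ ^ 2 / (2 * γ))

noncomputable def smoothedDensity (d : ℕ) (p : EuclideanSpace ℝ (Fin d) → ℝ) (γ : ℝ)
    (y : EuclideanSpace ℝ (Fin d)) : ℝ :=
  ∫ x, p x * gaussDensity d γ (y - γ • x)

noncomputable def scoreFn (d : ℕ) (p : EuclideanSpace ℝ (Fin d) → ℝ) (γ : ℝ)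
    (y : EuclideanSpace ℝ (Fin d)) : EuclideanSpace ℝ (Fin d) :=
  gradient (fun z => Real.log (smoothedDensity d p γ z)) y

/-- Squared IEM with `Γ = ∞` (SNR integral over `(0, ∞)`). -/
noncomputable def IEMsqInf (d : ℕ) (p : EuclideanSpace ℝ (Fin d) → ℝ)
    (x₁ x₂ : EuclideanSpace ℝ (Fin d)) : ℝ≥0∞ :=
  ∫⁻ γ in Set.Ioi (0 : ℝ),
    ∫⁻ w, ENNReal.ofReal
      (‖scoreFn d p γ (γ • x₁ + w) - scoreFn d p γ (γ • x₂ + w)‖ ^ 2 * gaussDensity d γ w)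

/-- The quadratic form `vᵀ M v` on `EuclideanSpace ℝ (Fin d)`. -/
noncomputable def quadForm (d : ℕ) (M : Matrix (Fin d) (Fin d) ℝ)
    (v : EuclideanSpace ℝ (Fin d)) : ℝ :=
  ∑ i, ∑ j, v i * M i j * v j

/-- The Gaussian density `N(μ, S)` on `ℝ^d`. -/
noncomputable def gaussianPDF (d : ℕ) (μ : EuclideanSpace ℝ (Fin d))
    (S : Matrix (Fin d) (Fin d) ℝ) (x : EuclideanSpace ℝ (Fin d)) : ℝ :=
  (2 * Real.pi) ^ (-(d : ℝ) / 2) * S.det ^ (-(1 : ℝ) / 2) *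
    Real.exp (-(quadForm d S⁻¹ (x - μ)) / 2)

/-! ### Auxiliary lemmas -/

section Aux

open scoped Matrix

variable {d : ℕ} {S : Matrix (Fin d) (Fin d) ℝ}

/-! #### One-dimensional Gaussian integrals -/

lemma IEM.gauss1d (a m : ℝ) :
    ∫ t : ℝ, Real.exp (-a * (t - m) ^ 2) = Real.sqrt (π / a) := by
  rw [show (fun t : ℝ => Real.exp (-a * (t - m) ^ 2))
      = fun t => (fun s => Real.exp (-a * s ^ 2)) (t - m) from rfl]
  rw [integral_sub_right_eq_self (fun s => Real.exp (-a * s ^ 2)) m]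
  exact integral_gaussian a

lemma IEM.gauss_conv (lam γ m y : ℝ) (hlam : 0 < lam) (hγ : 0 < γ) :
    ∫ t : ℝ, Real.exp (-(t - m) ^ 2 / (2 * lam)) * Real.exp (-(y - γ * t) ^ 2 / (2 * γ))
      = Real.sqrt (2 * π * lam / (1 + γ * lam)) *
        Real.exp (-(y - γ * m) ^ 2 / (2 * (γ ^ 2 * lam + γ))) := by
  have hA : 0 < (1 + γ * lam) / (2 * lam) := by positivity
  have h1 : 0 < 1 + γ * lam := by positivity
  have key : ∀ t : ℝ,
      Real.exp (-(t - m) ^ 2 / (2 * lam)) * Real.exp (-(y - γ * t) ^ 2 / (2 * γ))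
      = Real.exp (-(y - γ * m) ^ 2 / (2 * (γ ^ 2 * lam + γ))) *
        Real.exp (-((1 + γ * lam) / (2 * lam)) * (t - (m + lam * y) / (1 + γ * lam)) ^ 2) := by
    intro t
    rw [← Real.exp_add, ← Real.exp_add]
    congr 1
    field_simp
    ring
  simp_rw [key]
  rw [integral_const_mul, IEM.gauss1d]
  rw [mul_comm]
  congr 1
  congr 1
  rw [div_div_eq_mul_div]
  ring

/-! #### Linear algebra: eigen-expansions -/

lemma IEM.quadForm_eq_inner (M : Matrix (Fin d) (Fin d) ℝ) (z : EuclideanSpace ℝ (Fin d)) :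
    quadForm d M z = inner (𝕜 := ℝ) z (Matrix.toEuclideanLin M z) := by
  simp only [quadForm, PiLp.inner_apply, RCLike.inner_apply, starRingEnd_apply, star_trivial,
    Matrix.toEuclideanLin_apply]
  simp [Matrix.mulVec, dotProduct, Finset.mul_sum, Finset.sum_mul, mul_assoc, mul_comm, mul_left_comm]

lemma IEM.inv_mulVec_eigen (hS : S.PosDef) (i : Fin d) :
    Matrix.toEuclideanLin S⁻¹ (hS.1.eigenvectorBasis i)
      = (hS.1.eigenvalues i)⁻¹ • hS.1.eigenvectorBasis i := by
  have hdet : S.det ≠ 0 := ne_of_gt hS.det_pos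
  have hlam : hS.1.eigenvalues i ≠ 0 := ne_of_gt (hS.eigenvalues_pos i)
  have h1 : S *ᵥ ⇑(hS.1.eigenvectorBasis i) = hS.1.eigenvalues i • ⇑(hS.1.eigenvectorBasis i) :=
    hS.1.mulVec_eigenvectorBasis i
  have h2 : S⁻¹ *ᵥ (S *ᵥ ⇑(hS.1.eigenvectorBasis i)) = ⇑(hS.1.eigenvectorBasis i) := by
    rw [Matrix.mulVec_mulVec, Matrix.nonsing_inv_mul S (isUnit_iff_ne_zero.2 hdet),
      Matrix.one_mulVec]
  rw [h1, Matrix.mulVec_smul] at h2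
  apply PiLp.ext
  intro j
  have h4 := congrFun h2 j
  simp only [Matrix.toEuclideanLin_apply]
  show (S⁻¹ *ᵥ ⇑(hS.1.eigenvectorBasis i)) j = ((hS.1.eigenvalues i)⁻¹ • hS.1.eigenvectorBasis i) j
  simp only [Pi.smul_apply, PiLp.smul_apply, smul_eq_mul] at h4 ⊢
  rw [eq_inv_mul_iff_mul_eq₀ hlam]
  exact h4

lemma IEM.expand_z (b : OrthonormalBasis (Fin d) ℝ (EuclideanSpace ℝ (Fin d)))
    (z : EuclideanSpace ℝ (Fin d)) : ∑ i, (inner (𝕜 := ℝ) (b i) z) • b i = z :=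
  b.sum_repr' z

lemma IEM.repr_norm_sq (b : OrthonormalBasis (Fin d) ℝ (EuclideanSpace ℝ (Fin d)))
    (z : EuclideanSpace ℝ (Fin d)) :
    ‖z‖ ^ 2 = ∑ i, (b.repr z i) ^ 2 := by
  rw [← b.repr.norm_map z, EuclideanSpace.norm_eq, Real.sq_sqrt (by positivity)]
  simp [sq_abs]

lemma IEM.norm_sq_eq_sum (b : OrthonormalBasis (Fin d) ℝ (EuclideanSpace ℝ (Fin d)))
    (z : EuclideanSpace ℝ (Fin d)) :
    ‖z‖ ^ 2 = ∑ i, (inner (𝕜 := ℝ) (b i) z) ^ 2 := by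
  rw [IEM.repr_norm_sq b z]
  simp_rw [b.repr_apply_apply]

lemma IEM.norm_comb_sq (b : OrthonormalBasis (Fin d) ℝ (EuclideanSpace ℝ (Fin d)))
    (c : Fin d → ℝ) : ‖∑ i, c i • b i‖ ^ 2 = ∑ i, c i ^ 2 := by
  rw [IEM.repr_norm_sq b]
  congr 1
  funext j
  congr 1
  rw [b.repr_apply_apply]
  exact b.orthonormal.inner_right_fintype c j

lemma IEM.quadForm_inv_eq_sum (hS : S.PosDef) (z : EuclideanSpace ℝ (Fin d)) :
    quadForm d S⁻¹ z
      = ∑ i, (inner (𝕜 := ℝ) (hS.1.eigenvectorBasis i) z) ^ 2 / hS.1.eigenvalues i := by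
  set b := hS.1.eigenvectorBasis with hb
  rw [IEM.quadForm_eq_inner]
  have hlin : Matrix.toEuclideanLin S⁻¹ z
      = ∑ i, ((hS.1.eigenvalues i)⁻¹ * inner (𝕜 := ℝ) (b i) z) • b i := by
    conv_lhs => rw [← IEM.expand_z b z]
    rw [map_sum]
    congr 1
    funext i
    rw [LinearMap.map_smul, IEM.inv_mulVec_eigen hS i, smul_smul, ← hb]
    rw [mul_comm]
  rw [hlin, inner_sum]
  congr 1
  funext i
  rw [inner_smul_right, real_inner_comm z (b i)]
  field_simp

/-! #### Integrals over Euclidean space -/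

lemma IEM.integral_euclidean_prod (h : Fin d → ℝ → ℝ) :
    ∫ x : EuclideanSpace ℝ (Fin d), ∏ i, h i (x i) = ∏ i, ∫ t, h i t := by
  rw [← MeasureTheory.integral_fintype_prod_eq_prod (fun i => h i)]
  exact (EuclideanSpace.volume_preserving_symm_measurableEquiv_toLp (Fin d)).integral_comp'
    (fun u => ∏ i, h i (u i))

lemma IEM.integrable_euclidean_prod (h : Fin d → ℝ → ℝ) (hi : ∀ i, Integrable (h i)) :
    Integrable (fun x : EuclideanSpace ℝ (Fin d) => ∏ i, h i (x i)) := by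
  have h1 : Integrable (fun u : Fin d → ℝ => ∏ i, h i (u i)) := Integrable.fintype_prod hi
  exact (EuclideanSpace.volume_preserving_symm_measurableEquiv_toLp (Fin d)).integrable_comp_emb
    (MeasurableEquiv.toLp 2 (Fin d → ℝ)).symm.measurableEmbedding |>.2 h1

lemma IEM.euclidean_norm_sq (w : EuclideanSpace ℝ (Fin d)) : ‖w‖ ^ 2 = ∑ i, w i ^ 2 := by
  rw [EuclideanSpace.norm_eq, Real.sq_sqrt (by positivity)]
  simp [sq_abs]

lemma IEM.gaussDensity_eq_prod {γ : ℝ} (w : EuclideanSpace ℝ (Fin d)) :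
    gaussDensity d γ w
      = (2 * π * γ) ^ (-(d : ℝ) / 2) * ∏ i, Real.exp (-(w i) ^ 2 / (2 * γ)) := by
  rw [gaussDensity, IEM.euclidean_norm_sq]
  congr 1
  rw [← Real.exp_sum]
  congr 1
  rw [← Finset.sum_neg_distrib, Finset.sum_div]

lemma IEM.integral_gauss1d_basic {γ : ℝ} (hγ : 0 < γ) :
    ∫ t : ℝ, Real.exp (-t ^ 2 / (2 * γ)) = Real.sqrt (2 * π * γ) := by
  have : ∀ t : ℝ, -t ^ 2 / (2 * γ) = -(1 / (2 * γ)) * t ^ 2 := by intro t; field_simp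
  simp_rw [this]
  rw [integral_gaussian]
  congr 1
  field_simp

lemma IEM.sqrt_pow_rpow {c : ℝ} (hc : 0 < c) :
    c ^ (-(d : ℝ) / 2) * Real.sqrt c ^ d = 1 := by
  rw [Real.sqrt_eq_rpow, ← Real.rpow_natCast (c ^ (1/2 : ℝ)) d, ← Real.rpow_mul hc.le,
    ← Real.rpow_add hc, show -(d : ℝ) / 2 + 1 / 2 * (d : ℝ) = 0 by ring, Real.rpow_zero]

lemma IEM.integral_gaussDensity {γ : ℝ} (hγ : 0 < γ) :
    ∫ w : EuclideanSpace ℝ (Fin d), gaussDensity d γ w = 1 := by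
  have h2 : (0:ℝ) < 2 * π * γ := by positivity
  calc ∫ w : EuclideanSpace ℝ (Fin d), gaussDensity d γ w
      = ∫ w : EuclideanSpace ℝ (Fin d),
          (2 * π * γ) ^ (-(d : ℝ) / 2) * ∏ i, Real.exp (-(w i) ^ 2 / (2 * γ)) := by
        congr 1; funext w; exact IEM.gaussDensity_eq_prod w
    _ = (2 * π * γ) ^ (-(d : ℝ) / 2) * ∫ w : EuclideanSpace ℝ (Fin d),
          ∏ i, Real.exp (-(w i) ^ 2 / (2 * γ)) := integral_const_mul _ _
    _ = (2 * π * γ) ^ (-(d : ℝ) / 2) * Real.sqrt (2 * π * γ) ^ d := by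
        rw [IEM.integral_euclidean_prod (fun _ t => Real.exp (-t ^ 2 / (2 * γ)))]
        congr 1
        rw [Finset.prod_congr rfl (fun i _ => IEM.integral_gauss1d_basic hγ), Finset.prod_const]
        simp
    _ = 1 := IEM.sqrt_pow_rpow h2

lemma IEM.integrable_gaussDensity {γ : ℝ} (hγ : 0 < γ) :
    Integrable (gaussDensity d γ) := by
  have : Integrable (fun w : EuclideanSpace ℝ (Fin d) =>
      (2 * π * γ) ^ (-(d : ℝ) / 2) * ∏ i, Real.exp (-(w i) ^ 2 / (2 * γ))) := by
    apply Integrable.const_mul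
    apply IEM.integrable_euclidean_prod (fun _ t => Real.exp (-t ^ 2 / (2 * γ)))
    intro i
    have : ∀ t : ℝ, -t ^ 2 / (2 * γ) = -(1 / (2 * γ)) * t ^ 2 := by intro t; field_simp
    simp_rw [this]
    exact integrable_exp_neg_mul_sq (by positivity)
  exact this.congr (Filter.Eventually.of_forall fun w => (IEM.gaussDensity_eq_prod w).symm)

lemma IEM.gaussDensity_nonneg {γ : ℝ} (hγ : 0 < γ) (w : EuclideanSpace ℝ (Fin d)) :
    0 ≤ gaussDensity d γ w := by
  rw [gaussDensity]
  positivity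

lemma IEM.lintegral_gaussDensity {γ : ℝ} (hγ : 0 < γ) :
    ∫⁻ w : EuclideanSpace ℝ (Fin d), ENNReal.ofReal (gaussDensity d γ w) = 1 := by
  rw [← ofReal_integral_eq_lintegral_ofReal (IEM.integrable_gaussDensity hγ)
    (Filter.Eventually.of_forall fun w => IEM.gaussDensity_nonneg hγ w)]
  rw [IEM.integral_gaussDensity hγ]
  simp

/-! #### Closed form of the smoothed density -/

lemma IEM.smoothed_closed (hS : S.PosDef) (μ : EuclideanSpace ℝ (Fin d)) {γ : ℝ} (hγ : 0 < γ)
    (y : EuclideanSpace ℝ (Fin d)) :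
    smoothedDensity d (gaussianPDF d μ S) γ y
      = ((2 * π) ^ (-(d : ℝ) / 2) * S.det ^ (-(1:ℝ) / 2) * (2 * π * γ) ^ (-(d : ℝ) / 2)
          * ∏ i, Real.sqrt (2 * π * hS.1.eigenvalues i / (1 + γ * hS.1.eigenvalues i))) *
        Real.exp (-∑ i, (inner (𝕜 := ℝ) (hS.1.eigenvectorBasis i) y
            - γ * inner (𝕜 := ℝ) (hS.1.eigenvectorBasis i) μ) ^ 2
          / (2 * (γ ^ 2 * hS.1.eigenvalues i + γ))) := by
  classical
  set b := hS.1.eigenvectorBasis with hb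
  set lam := hS.1.eigenvalues with hlam
  set K : ℝ := (2 * π) ^ (-(d : ℝ) / 2) * S.det ^ (-(1:ℝ) / 2) * (2 * π * γ) ^ (-(d : ℝ) / 2)
    with hK
  set f : Fin d → ℝ → ℝ := fun i t =>
    Real.exp (-(t - inner (𝕜 := ℝ) (b i) μ) ^ 2 / (2 * lam i)) *
    Real.exp (-(inner (𝕜 := ℝ) (b i) y - γ * t) ^ 2 / (2 * γ)) with hf
  have key : ∀ x : EuclideanSpace ℝ (Fin d),
      gaussianPDF d μ S x * gaussDensity d γ (y - γ • x) = K * ∏ i, f i (b.repr x i) := by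
    intro x
    rw [gaussianPDF, gaussDensity, IEM.quadForm_inv_eq_sum hS, IEM.norm_sq_eq_sum b]
    have e1 : Real.exp (-(∑ i, (inner (𝕜 := ℝ) (b i) (x - μ)) ^ 2 / lam i) / 2)
        = ∏ i, Real.exp (-(b.repr x i - inner (𝕜 := ℝ) (b i) μ) ^ 2 / (2 * lam i)) := by
      rw [← Real.exp_sum]
      congr 1
      rw [← Finset.sum_neg_distrib, Finset.sum_div]
      congr 1
      funext i
      rw [inner_sub_right, b.repr_apply_apply]
      ring
    have e2 : Real.exp (-(∑ i, (inner (𝕜 := ℝ) (b i) (y - γ • x)) ^ 2) / (2 * γ))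
        = ∏ i, Real.exp (-(inner (𝕜 := ℝ) (b i) y - γ * b.repr x i) ^ 2 / (2 * γ)) := by
      rw [← Real.exp_sum]
      congr 1
      rw [← Finset.sum_neg_distrib, Finset.sum_div]
      congr 1
      funext i
      rw [inner_sub_right, inner_smul_right, b.repr_apply_apply]
    rw [e1, e2]
    rw [hK, hf]
    rw [Finset.prod_mul_distrib]
    ring
  have step1 : smoothedDensity d (gaussianPDF d μ S) γ y
      = ∫ x : EuclideanSpace ℝ (Fin d), K * ∏ i, f i (b.repr x i) := by
    rw [smoothedDensity]
    congr 1
    funext x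
    exact key x
  have step2 : (∫ x : EuclideanSpace ℝ (Fin d), K * ∏ i, f i (b.repr x i))
      = ∫ u : EuclideanSpace ℝ (Fin d), K * ∏ i, f i (u i) :=
    MeasurePreserving.integral_comp' (b.measurePreserving_measurableEquiv)
      (fun u : EuclideanSpace ℝ (Fin d) => K * ∏ i, f i (u i))
  rw [step1, step2, integral_const_mul, IEM.integral_euclidean_prod f]
  have step3 : ∀ i, (∫ t, f i t)
      = Real.sqrt (2 * π * lam i / (1 + γ * lam i)) *
        Real.exp (-(inner (𝕜 := ℝ) (b i) y - γ * inner (𝕜 := ℝ) (b i) μ) ^ 2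
          / (2 * (γ ^ 2 * lam i + γ))) := by
    intro i
    exact IEM.gauss_conv (lam i) γ _ _ (hS.eigenvalues_pos i) hγ
  rw [Finset.prod_congr rfl (fun i _ => step3 i), Finset.prod_mul_distrib, ← Real.exp_sum,
    ← mul_assoc]
  congr 1
  simp only [neg_div]
  rw [Finset.sum_neg_distrib]

/-! #### Gradient of the log-density -/

lemma IEM.grad_quad_log (b : OrthonormalBasis (Fin d) ℝ (EuclideanSpace ℝ (Fin d)))
    (a M : Fin d → ℝ) (L : ℝ) (z : EuclideanSpace ℝ (Fin d)) :
    HasGradientAt (fun w : EuclideanSpace ℝ (Fin d) =>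
        L + -∑ i, (inner (𝕜 := ℝ) (b i) w - a i) ^ 2 / (2 * M i))
      (-∑ i, ((inner (𝕜 := ℝ) (b i) z - a i) / M i) • b i) z := by
  rw [hasGradientAt_iff_hasFDerivAt]
  simp only [div_eq_mul_inv]
  simp only [pow_two]
  have hterm : ∀ i : Fin d, HasFDerivAt
      (fun w : EuclideanSpace ℝ (Fin d) =>
        ((inner (𝕜 := ℝ) (b i) w - a i) * (inner (𝕜 := ℝ) (b i) w - a i)) * (2 * M i)⁻¹)
      ((2 * M i)⁻¹ • ((inner (𝕜 := ℝ) (b i) z - a i) • innerSL ℝ (b i)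
        + (inner (𝕜 := ℝ) (b i) z - a i) • innerSL ℝ (b i))) z := by
    intro i
    have h0 : HasFDerivAt (fun w : EuclideanSpace ℝ (Fin d) => inner (𝕜 := ℝ) (b i) w)
        (innerSL ℝ (b i)) z := (innerSL ℝ (b i)).hasFDerivAt
    have h1 := h0.sub_const (a i)
    exact (h1.mul h1).mul_const (2 * M i)⁻¹
  have hsum := HasFDerivAt.sum (fun i (_ : i ∈ Finset.univ) => hterm i)
  have hF := (hsum.neg).const_add L
  refine (hF.congr_fderiv (Eq.symm ?_)).congr_of_eventuallyEq (Filter.Eventually.of_forall fun w => ?_)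
  swap
  · simp [Finset.sum_apply]
  apply ContinuousLinearMap.ext
  intro w
  rw [InnerProductSpace.toDual_apply_apply]
  rw [inner_neg_left, sum_inner]
  simp only [ContinuousLinearMap.neg_apply, ContinuousLinearMap.coe_sum',
    Finset.sum_apply, ContinuousLinearMap.coe_smul', Pi.smul_apply,
    innerSL_apply_apply, ContinuousLinearMap.add_apply]
  congr 1
  apply Finset.sum_congr rfl
  intro i _
  rw [inner_smul_left]
  simp only [starRingEnd_apply, star_trivial, pow_one, Nat.cast_ofNat, smul_eq_mul]
  field_simp
  ring

lemma IEM.score_closed (hS : S.PosDef) (μ : EuclideanSpace ℝ (Fin d)) {γ : ℝ} (hγ : 0 < γ)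
    (z : EuclideanSpace ℝ (Fin d)) :
    scoreFn d (gaussianPDF d μ S) γ z
      = -∑ i, ((inner (𝕜 := ℝ) (hS.1.eigenvectorBasis i) z
          - γ * inner (𝕜 := ℝ) (hS.1.eigenvectorBasis i) μ)
            / (γ ^ 2 * hS.1.eigenvalues i + γ)) • hS.1.eigenvectorBasis i := by
  set b := hS.1.eigenvectorBasis
  set lam := hS.1.eigenvalues
  set C : ℝ := (2 * π) ^ (-(d : ℝ) / 2) * S.det ^ (-(1:ℝ) / 2) * (2 * π * γ) ^ (-(d : ℝ) / 2)
      * ∏ i, Real.sqrt (2 * π * lam i / (1 + γ * lam i)) with hC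
  have hdet : (0:ℝ) < S.det := hS.det_pos
  have hCpos : 0 < C := by
    apply mul_pos
    · apply mul_pos
      · apply mul_pos
        · positivity
        · positivity
      · positivity
    · apply Finset.prod_pos
      intro i _
      apply Real.sqrt_pos.2
      have h1 : 0 < lam i := hS.eigenvalues_pos i
      positivity
  have hfun : (fun w => Real.log (smoothedDensity d (gaussianPDF d μ S) γ w))
      = fun w => Real.log C + -∑ i, (inner (𝕜 := ℝ) (b i) w - γ * inner (𝕜 := ℝ) (b i) μ) ^ 2
          / (2 * (γ ^ 2 * lam i + γ)) := by
    funext w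
    rw [IEM.smoothed_closed hS μ hγ w, Real.log_mul hCpos.ne' (Real.exp_pos _).ne', Real.log_exp]
  rw [scoreFn, hfun]
  exact (IEM.grad_quad_log b (fun i => γ * inner (𝕜 := ℝ) (b i) μ)
    (fun i => γ ^ 2 * lam i + γ) (Real.log C) z).gradient

lemma IEM.score_diff_norm_sq (hS : S.PosDef) (μ : EuclideanSpace ℝ (Fin d)) {γ : ℝ} (hγ : 0 < γ)
    (x₁ x₂ w : EuclideanSpace ℝ (Fin d)) :
    ‖scoreFn d (gaussianPDF d μ S) γ (γ • x₁ + w)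
        - scoreFn d (gaussianPDF d μ S) γ (γ • x₂ + w)‖ ^ 2
      = ∑ i, (inner (𝕜 := ℝ) (hS.1.eigenvectorBasis i) (x₁ - x₂)) ^ 2
          / (1 + γ * hS.1.eigenvalues i) ^ 2 := by
  set b := hS.1.eigenvectorBasis
  set lam := hS.1.eigenvalues
  rw [IEM.score_closed hS μ hγ, IEM.score_closed hS μ hγ]
  have hcomb : (-∑ i, ((inner (𝕜 := ℝ) (b i) (γ • x₁ + w) - γ * inner (𝕜 := ℝ) (b i) μ)
          / (γ ^ 2 * lam i + γ)) • b i)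
      - (-∑ i, ((inner (𝕜 := ℝ) (b i) (γ • x₂ + w) - γ * inner (𝕜 := ℝ) (b i) μ)
          / (γ ^ 2 * lam i + γ)) • b i)
      = ∑ i, (-(γ * inner (𝕜 := ℝ) (b i) (x₁ - x₂) / (γ ^ 2 * lam i + γ))) • b i := by
    rw [neg_sub_neg, ← Finset.sum_sub_distrib]
    apply Finset.sum_congr rfl
    intro i _
    rw [← sub_smul]
    congr 1
    rw [inner_add_right, inner_add_right, inner_smul_right, inner_smul_right, inner_sub_right]
    ring
  rw [hcomb, IEM.norm_comb_sq b]
  apply Finset.sum_congr rfl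
  intro i _
  have h1 : 0 < lam i := hS.eigenvalues_pos i
  have h2 : (0:ℝ) < 1 + γ * lam i := by positivity
  rw [neg_pow, div_pow, mul_pow]
  field_simp
  ring

/-! #### The outer integral over the SNR parameter -/

lemma IEM.deriv_aux {lam : ℝ} (hlam : 0 < lam) {x : ℝ} (hx : x ∈ Set.Ici (0:ℝ)) :
    HasDerivAt (fun γ : ℝ => -lam⁻¹ * (1 + γ * lam)⁻¹) (((1 + x * lam) ^ 2)⁻¹) x := by
  have hpos : (0:ℝ) < 1 + x * lam := by
    have := hx.out
    positivity
  have h0 : HasDerivAt (fun γ : ℝ => 1 + γ * lam) lam x := by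
    simpa using (hasDerivAt_mul_const lam).const_add 1
  have h1 := h0.inv (ne_of_gt hpos)
  have h2 := h1.const_mul (-lam⁻¹)
  refine h2.congr_deriv ?_
  field_simp

lemma IEM.tendsto_aux {lam : ℝ} (hlam : 0 < lam) :
    Filter.Tendsto (fun γ : ℝ => -lam⁻¹ * (1 + γ * lam)⁻¹) Filter.atTop (nhds 0) := by
  have h1 : Filter.Tendsto (fun γ : ℝ => 1 + γ * lam) Filter.atTop Filter.atTop :=
    Filter.tendsto_atTop_add_const_left _ 1 (Filter.Tendsto.atTop_mul_const hlam Filter.tendsto_id)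
  have h2 := h1.inv_tendsto_atTop
  have h3 := h2.const_mul (-lam⁻¹)
  simpa using h3

lemma IEM.integral_inv_sq {lam : ℝ} (hlam : 0 < lam) :
    ∫ γ in Set.Ioi (0:ℝ), ((1 + γ * lam) ^ 2)⁻¹ = lam⁻¹ := by
  rw [integral_Ioi_of_hasDerivAt_of_nonneg' (fun x hx => IEM.deriv_aux hlam hx)
    (fun x _ => by positivity) (IEM.tendsto_aux hlam)]
  simp

lemma IEM.integrableOn_inv_sq {lam : ℝ} (hlam : 0 < lam) :
    IntegrableOn (fun γ : ℝ => ((1 + γ * lam) ^ 2)⁻¹) (Set.Ioi 0) :=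
  integrableOn_Ioi_deriv_of_nonneg' (fun x hx => IEM.deriv_aux hlam hx)
    (fun x _ => by positivity) (IEM.tendsto_aux hlam)

lemma IEM.outer_integral (c lam : Fin d → ℝ) (hlam : ∀ i, 0 < lam i) :
    ∫⁻ γ in Set.Ioi (0:ℝ), ENNReal.ofReal (∑ i, (c i) ^ 2 / (1 + γ * lam i) ^ 2)
      = ENNReal.ofReal (∑ i, (c i) ^ 2 / lam i) := by
  have step1 : ∀ γ : ℝ, ENNReal.ofReal (∑ i, (c i) ^ 2 / (1 + γ * lam i) ^ 2)
      = ∑ i, ENNReal.ofReal ((c i) ^ 2 * (((1 + γ * lam i) ^ 2)⁻¹)) := by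
    intro γ
    rw [ENNReal.ofReal_sum_of_nonneg (fun i _ => by positivity)]
    simp_rw [div_eq_mul_inv]
  simp_rw [step1]
  rw [lintegral_finset_sum]
  swap
  · intro i _
    apply Measurable.ennreal_ofReal
    apply Measurable.const_mul
    exact ((measurable_const.add (measurable_id.mul_const _)).pow_const 2).inv
  have step2 : ∀ i : Fin d, ∫⁻ γ in Set.Ioi (0:ℝ),
      ENNReal.ofReal ((c i) ^ 2 * (((1 + γ * lam i) ^ 2)⁻¹))
      = ENNReal.ofReal ((c i) ^ 2 * (lam i)⁻¹) := by
    intro i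
    rw [← ofReal_integral_eq_lintegral_ofReal
      (((IEM.integrableOn_inv_sq (hlam i))).const_mul ((c i)^2))
      (Filter.Eventually.of_forall (fun x => by positivity))]
    rw [MeasureTheory.integral_const_mul, IEM.integral_inv_sq (hlam i)]
  simp_rw [step2]
  rw [← ENNReal.ofReal_sum_of_nonneg
    (fun i _ => mul_nonneg (sq_nonneg _) (inv_nonneg.2 (hlam i).le))]
  simp_rw [div_eq_mul_inv]

end Aux

/-- **the IEM of a Gaussian prior is the Mahalanobis distance.**
If `p = N(μ, Σ)` with `Σ` symmetric positive definite, then for all `x₁, x₂`,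
`∫₀^∞ E_w[‖∇log q_γ(γx₁+w) − ∇log q_γ(γx₂+w)‖²] dγ = (x₁−x₂)ᵀ Σ⁻¹ (x₁−x₂)`;
in particular `IEM_p(x₁, x₂, ∞) = √((x₁−x₂)ᵀ Σ⁻¹ (x₁−x₂))`. -/
theorem gaussian_IEM_eq_mahalanobis (d : ℕ) (μ : EuclideanSpace ℝ (Fin d))
    (S : Matrix (Fin d) (Fin d) ℝ) (hS : S.PosDef) :
    ∀ x₁ x₂ : EuclideanSpace ℝ (Fin d),
      IEMsqInf d (gaussianPDF d μ S) x₁ x₂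
        = ENNReal.ofReal (quadForm d S⁻¹ (x₁ - x₂)) ∧
      Real.sqrt (IEMsqInf d (gaussianPDF d μ S) x₁ x₂).toReal
        = Real.sqrt (quadForm d S⁻¹ (x₁ - x₂)) := by
  intro x₁ x₂
  set b := hS.1.eigenvectorBasis
  set lam := hS.1.eigenvalues
  set c : Fin d → ℝ := fun i => inner (𝕜 := ℝ) (b i) (x₁ - x₂) with hc
  have hlam : ∀ i, 0 < lam i := fun i => hS.eigenvalues_pos i
  have hinner : ∀ γ ∈ Set.Ioi (0:ℝ),
      (∫⁻ w, ENNReal.ofReal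
        (‖scoreFn d (gaussianPDF d μ S) γ (γ • x₁ + w)
            - scoreFn d (gaussianPDF d μ S) γ (γ • x₂ + w)‖ ^ 2 * gaussDensity d γ w))
      = ENNReal.ofReal (∑ i, (c i) ^ 2 / (1 + γ * lam i) ^ 2) := by
    intro γ hγ
    have hγ' : 0 < γ := hγ
    have hA : 0 ≤ ∑ i, (c i) ^ 2 / (1 + γ * lam i) ^ 2 := by positivity
    have heq : ∀ w : EuclideanSpace ℝ (Fin d),
        ENNReal.ofReal
          (‖scoreFn d (gaussianPDF d μ S) γ (γ • x₁ + w)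
              - scoreFn d (gaussianPDF d μ S) γ (γ • x₂ + w)‖ ^ 2 * gaussDensity d γ w)
        = ENNReal.ofReal (∑ i, (c i) ^ 2 / (1 + γ * lam i) ^ 2)
            * ENNReal.ofReal (gaussDensity d γ w) := by
      intro w
      rw [IEM.score_diff_norm_sq hS μ hγ' x₁ x₂ w, ENNReal.ofReal_mul hA]
    simp_rw [heq]
    rw [lintegral_const_mul' _ _ ENNReal.ofReal_ne_top, IEM.lintegral_gaussDensity hγ', mul_one]
  have hmain : IEMsqInf d (gaussianPDF d μ S) x₁ x₂
      = ENNReal.ofReal (quadForm d S⁻¹ (x₁ - x₂)) := by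
    rw [IEMsqInf]
    rw [setLIntegral_congr_fun measurableSet_Ioi hinner]
    rw [IEM.outer_integral c lam hlam]
    congr 1
    exact (IEM.quadForm_inv_eq_sum hS (x₁ - x₂)).symm
  refine ⟨hmain, ?_⟩
  rw [hmain, ENNReal.toReal_ofReal]
  rw [IEM.quadForm_inv_eq_sum hS (x₁ - x₂)]
  apply Finset.sum_nonneg
  intro i _
  exact div_nonneg (sq_nonneg _) (hlam i).le
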